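/- arXiv:2201.06764 — 2 statements merged into one kernel-verified Lean document; each statement's English description precedes it below -/
import Mathlib

section
/- For 3 ≤ d ≤ 10 and any p > (d+2)/(d-2), the quantity (d-2)² - 4p·(2/(p-1))·(d-2-2/(p-1)) is strictly negative. -/
theorem stmt_2 (d : ℕ) (hd1 : 3 ≤ d) (hd2 : d ≤ 10) (p : ℝ)
    (hp : ((d : ℝ) + 2) / ((d : ℝ) - 2) < p) :
    ((d : ℝ) - 2) ^ 2 - 4 * p * ((2 / (p - 1)) * ((d : ℝ) - 2 - 2 / (p - 1))) < 0 := by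
  have hd : (1:ℝ) ≤ (d:ℝ) - 2 := by
    have : (3:ℝ) ≤ (d:ℝ) := by exact_mod_cast hd1
    linarith
  have hd' : (d:ℝ) - 2 ≤ 8 := by
    have : (d:ℝ) ≤ 10 := by exact_mod_cast hd2
    linarith
  have hdpos : (0:ℝ) < (d:ℝ) - 2 := by linarith
  have hp1 : 1 < p := by
    have h1 : (1:ℝ) ≤ ((d:ℝ)+2)/((d:ℝ)-2) := by
      rw [le_div_iff₀ hdpos]; linarith
    linarith
  have hu : 0 < p - 1 := by linarith
  have hs : 4 < ((d:ℝ)-2) * (p-1) := by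
    have h := (div_lt_iff₀ hdpos).mp hp
    nlinarith
  have key : ((d:ℝ) - 2) ^ 2 - 4 * p * ((2 / (p - 1)) * ((d : ℝ) - 2 - 2 / (p - 1)))
      = (((d:ℝ)-2)^2*(p-1)^2 - 8*p*(((d:ℝ)-2)*(p-1)-2)) / (p-1)^2 := by
    field_simp; ring
  rw [key]
  apply div_neg_of_neg_of_pos _ (by positivity)
  nlinarith [mul_le_mul_of_nonneg_right hd' hu.le, sq_nonneg (((d:ℝ)-2)*(p-1) - 4),
    mul_pos hu (show (0:ℝ) < ((d:ℝ)-2)*(p-1) - 2 by linarith)]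
end

section
/- Let Z : (1,∞) → ℝ be C¹, negative, and satisfy Z' + 2rZ = -(λ+d) - f(r) where f(r) = Z(r)² + ((d-1)/r)Z(r) + g(r) with g continuous, g ≥ 0, and g(r) = O(e^{-c r²}) for some c > 0. If lim_{r→∞} Z(r) = L exists in ℝ (finite), then L = 0 and moreover lim_{r→∞} r·Z(r) = -(λ+d)/2. -/
open Filter Asymptotics intervalIntegral

private lemma hasDeriv_expsq (s : ℝ) :
    HasDerivAt (fun t : ℝ => Real.exp (t^2)) (2 * s * Real.exp (s^2)) s := by
  have h := (hasDerivAt_pow 2 s).exp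
  convert h using 1
  simp [pow_one]; ring

private lemma hasDeriv_G1 {s : ℝ} (hs : s ≠ 0) :
    HasDerivAt (fun t : ℝ => Real.exp (t^2) / (2*t))
      (Real.exp (s^2) - Real.exp (s^2) / (2*s^2)) s := by
  have h := (hasDeriv_expsq s).div ((hasDerivAt_id s).const_mul 2) (by simpa using hs)
  refine h.congr_deriv ?_
  simp only [id]
  field_simp

private lemma hasDeriv_G2 {s : ℝ} (hs : s ≠ 0) :
    HasDerivAt (fun t : ℝ => Real.exp (t^2) / (4*t^3))
      (Real.exp (s^2) / (2*s^2) - 3 * Real.exp (s^2) / (4*s^4)) s := by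
  have h := (hasDeriv_expsq s).div ((hasDerivAt_pow 3 s).const_mul 4)
    (by simp [pow_ne_zero, hs])
  refine h.congr_deriv ?_
  field_simp
  ring

private lemma Ibounds {a r : ℝ} (ha : 2 ≤ a) (hr : a ≤ r) :
    Real.exp (r^2)/(2*r) - Real.exp (a^2)/(2*a) ≤ (∫ s in a..r, Real.exp (s^2)) ∧
    (∫ s in a..r, Real.exp (s^2)) ≤ Real.exp (r^2)/(2*r) + Real.exp (r^2)/r^3 := by
  have huIcc : Set.uIcc a r = Set.Icc a r := Set.uIcc_of_le hr
  have hpos : ∀ s ∈ Set.Icc a r, (2:ℝ) ≤ s := fun s hs => le_trans ha hs.1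
  have cont0 : ContinuousOn (fun s : ℝ => Real.exp (s^2)) (Set.uIcc a r) := by fun_prop
  have cont1 : ContinuousOn (fun s : ℝ => Real.exp (s^2) / (2*s^2)) (Set.uIcc a r) := by
    apply ContinuousOn.div (by fun_prop) (by fun_prop)
    intro s hs
    have h2 := hpos s (huIcc ▸ hs)
    have hs0 : (0:ℝ) < s := by linarith
    positivity
  have cont2 : ContinuousOn (fun s : ℝ => 3 * Real.exp (s^2) / (4*s^4)) (Set.uIcc a r) := by
    apply ContinuousOn.div (by fun_prop) (by fun_prop)
    intro s hs
    have h2 := hpos s (huIcc ▸ hs)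
    have hs0 : (0:ℝ) < s := by linarith
    positivity
  have int0 : IntervalIntegrable (fun s : ℝ => Real.exp (s^2)) MeasureTheory.volume a r :=
    cont0.intervalIntegrable
  have int1 : IntervalIntegrable (fun s : ℝ => Real.exp (s^2) / (2*s^2)) MeasureTheory.volume a r :=
    cont1.intervalIntegrable
  have int2 : IntervalIntegrable (fun s : ℝ => 3 * Real.exp (s^2) / (4*s^4)) MeasureTheory.volume a r :=
    cont2.intervalIntegrable
  have ftc1 : (∫ s in a..r, (Real.exp (s^2) - Real.exp (s^2) / (2*s^2)))
      = Real.exp (r^2)/(2*r) - Real.exp (a^2)/(2*a) := by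
    apply integral_eq_sub_of_hasDerivAt
    · intro s hs
      have h2 := hpos s (huIcc ▸ hs)
      exact hasDeriv_G1 (by intro h; rw [h] at h2; norm_num at h2)
    · exact int0.sub int1
  have ftc2 : (∫ s in a..r, (Real.exp (s^2) / (2*s^2) - 3 * Real.exp (s^2) / (4*s^4)))
      = Real.exp (r^2)/(4*r^3) - Real.exp (a^2)/(4*a^3) := by
    apply integral_eq_sub_of_hasDerivAt
    · intro s hs
      have h2 := hpos s (huIcc ▸ hs)
      exact hasDeriv_G2 (by intro h; rw [h] at h2; norm_num at h2)
    · exact int1.sub int2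
  rw [integral_sub int0 int1] at ftc1
  rw [integral_sub int1 int2] at ftc2
  set I := ∫ s in a..r, Real.exp (s^2) with hI
  set J := ∫ s in a..r, Real.exp (s^2) / (2*s^2) with hJ
  set K := ∫ s in a..r, 3 * Real.exp (s^2) / (4*s^4) with hK
  have hJ0 : 0 ≤ J := by
    apply integral_nonneg hr
    intro s hs
    have h2 := hpos s hs
    have hs0 : (0:ℝ) < s := by linarith
    positivity
  have hKJ : K ≤ (3/8) * J := by
    have h38 : (3/8) * J = ∫ s in a..r, (3/8) * (Real.exp (s^2) / (2*s^2)) := by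
      rw [integral_const_mul]
    rw [h38]
    apply integral_mono_on hr int2 (int1.const_mul _)
    intro s hs
    have h2 := hpos s hs
    calc 3 * Real.exp (s^2) / (4*s^4) ≤ 3 * Real.exp (s^2) / (16*s^2) := by
          apply div_le_div_of_nonneg_left (by positivity) (by nlinarith) (by nlinarith [mul_nonneg (mul_nonneg (by nlinarith : (0:ℝ) ≤ 4*s^2) (by linarith : (0:ℝ) ≤ s-2)) (by linarith : (0:ℝ) ≤ s+2)])
      _ = 3/8 * (Real.exp (s^2)/(2*s^2)) := by ring
  have hc1 : 0 ≤ Real.exp (a^2)/(2*a) :=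
    div_nonneg (Real.exp_pos _).le (by linarith)
  have hc2 : 0 ≤ Real.exp (a^2)/(4*a^3) :=
    div_nonneg (Real.exp_pos _).le (by nlinarith)
  have hX : 0 ≤ Real.exp (r^2)/(4*r^3) :=
    div_nonneg (Real.exp_pos _).le (by nlinarith)
  have hJle : J ≤ Real.exp (r^2)/r^3 := by
    have h4 : Real.exp (r^2)/r^3 = 4 * (Real.exp (r^2)/(4*r^3)) := by ring
    rw [h4]
    linarith
  constructor
  · linarith
  · linarith

private lemma texp0 : Filter.Tendsto (fun r : ℝ => r * Real.exp (-r^2)) Filter.atTop (nhds 0) := by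
  have h1 : Filter.Tendsto (fun r : ℝ => r * Real.exp (-r)) Filter.atTop (nhds 0) := by
    simpa using Real.tendsto_pow_mul_exp_neg_atTop_nhds_zero 1
  apply tendsto_of_tendsto_of_tendsto_of_le_of_le' tendsto_const_nhds h1
  · filter_upwards [Filter.eventually_ge_atTop (0:ℝ)] with r hr
    positivity
  · filter_upwards [Filter.eventually_ge_atTop (1:ℝ)] with r hr
    have : Real.exp (-r^2) ≤ Real.exp (-r) := by
      apply Real.exp_le_exp.mpr; nlinarith
    nlinarith [Real.exp_pos (-r^2)]

private lemma Ilim {a : ℝ} (ha : 2 ≤ a) :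
    Tendsto (fun r : ℝ => r * Real.exp (-r^2) * ∫ s in a..r, Real.exp (s^2))
      atTop (nhds (1/2)) := by
  have hlow : Tendsto (fun r : ℝ => 1/2 - Real.exp (a^2)/(2*a) * (r * Real.exp (-r^2)))
      atTop (nhds (1/2)) := by
    have h1 := texp0.const_mul (Real.exp (a^2)/(2*a))
    have h2 := (tendsto_const_nhds (x := (1:ℝ)/2) (f := atTop)).sub h1
    simpa using h2
  have hup : Tendsto (fun r : ℝ => 1/2 + 1/r^2) atTop (nhds (1/2)) := by
    have h1 : Tendsto (fun r : ℝ => 1/r^2) atTop (nhds 0) := by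
      have h2 : Tendsto (fun r : ℝ => r^2) atTop atTop :=
        tendsto_pow_atTop (two_ne_zero)
      simpa [Function.comp_def, one_div] using tendsto_inv_atTop_zero.comp h2
    simpa using (tendsto_const_nhds (x := (1:ℝ)/2) (f := atTop)).add h1
  apply tendsto_of_tendsto_of_tendsto_of_le_of_le' hlow hup
  · filter_upwards [eventually_ge_atTop a] with r hr
    have hb := (Ibounds ha hr).1
    have hr0 : (0:ℝ) < r := by linarith
    have hre : 0 ≤ r * Real.exp (-r^2) := by positivity
    have key : r * Real.exp (-r^2) * (Real.exp (r^2)/(2*r) - Real.exp (a^2)/(2*a))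
        = 1/2 - Real.exp (a^2)/(2*a) * (r * Real.exp (-r^2)) := by
      rw [Real.exp_neg]
      have := (Real.exp_pos (r^2)).ne'
      field_simp
    rw [← key]
    exact mul_le_mul_of_nonneg_left hb hre
  · filter_upwards [eventually_ge_atTop a] with r hr
    have hb := (Ibounds ha hr).2
    have hr0 : (0:ℝ) < r := by linarith
    have hre : 0 ≤ r * Real.exp (-r^2) := by positivity
    have key : r * Real.exp (-r^2) * (Real.exp (r^2)/(2*r) + Real.exp (r^2)/r^3)
        = 1/2 + 1/r^2 := by
      rw [Real.exp_neg]
      have := (Real.exp_pos (r^2)).ne'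
      field_simp
    rw [← key]
    exact mul_le_mul_of_nonneg_left hb hre

private lemma core (Z h : ℝ → ℝ) (M : ℝ)
    (hZd : ∀ r ∈ Set.Ioi (1:ℝ), HasDerivAt Z (-(2*r*Z r) - h r) r)
    (hh : ContinuousOn h (Set.Ioi 1))
    (hhM : Tendsto h atTop (nhds M)) :
    Tendsto (fun r : ℝ => r * Z r) atTop (nhds (-M/2)) := by
  rw [Metric.tendsto_nhds]
  intro ε hε
  set ε' := ε / (4 * (1 + |M|)) with hε'def
  have hM0 : (0:ℝ) < 1 + |M| := by positivity
  have hε' : 0 < ε' := by positivity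
  have hev : ∀ᶠ s in atTop, |h s - M| ≤ ε' := by
    filter_upwards [Metric.tendsto_nhds.mp hhM ε' hε'] with s hs
    rw [Real.dist_eq] at hs; linarith
  rw [eventually_atTop] at hev
  obtain ⟨a₀, ha₀⟩ := hev
  set a := max 2 a₀ with hadef
  have ha2 : (2:ℝ) ≤ a := le_max_left _ _
  have hha : ∀ s, a ≤ s → |h s - M| ≤ ε' :=
    fun s hs => ha₀ s (le_trans (le_max_right _ _) hs)
  set C := Real.exp (a^2) * Z a with hCdef
  have e1 : ∀ᶠ r in atTop,
      |r * Real.exp (-r^2) * (∫ s in a..r, Real.exp (s^2)) - 1/2| ≤ ε' := by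
    filter_upwards [Metric.tendsto_nhds.mp (Ilim ha2) ε' hε'] with r hr
    rw [Real.dist_eq] at hr; linarith
  have e2 : ∀ᶠ r in atTop,
      r * Real.exp (-r^2) * (∫ s in a..r, Real.exp (s^2)) ≤ 1 := by
    filter_upwards [Metric.tendsto_nhds.mp (Ilim ha2) (1/2) (by norm_num)] with r hr
    rw [Real.dist_eq] at hr
    have := abs_lt.mp hr
    linarith [this.2]
  have e3 : ∀ᶠ r in atTop, |C| * (r * Real.exp (-r^2)) ≤ ε' := by
    have h0 : Tendsto (fun r : ℝ => |C| * (r * Real.exp (-r^2))) atTop (nhds 0) := by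
      simpa using texp0.const_mul |C|
    filter_upwards [Metric.tendsto_nhds.mp h0 ε' hε'] with r hr
    rw [Real.dist_eq, sub_zero] at hr
    exact le_trans (le_abs_self _) hr.le
  filter_upwards [e1, e2, e3, eventually_ge_atTop a] with r h1 h2 h3 hra
  have hr2 : (2:ℝ) ≤ r := le_trans ha2 hra
  have hr0 : (0:ℝ) < r := by linarith
  have hq : 0 ≤ r * Real.exp (-r^2) := by positivity
  have hsub : Set.uIcc a r ⊆ Set.Ioi 1 := by
    rw [Set.uIcc_of_le hra]
    intro s hs
    have : a ≤ s := hs.1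
    simp only [Set.mem_Ioi]
    linarith
  have hcontE : ContinuousOn (fun s : ℝ => Real.exp (s^2)) (Set.uIcc a r) := by fun_prop
  have hconthE : ContinuousOn (fun s : ℝ => h s * Real.exp (s^2)) (Set.uIcc a r) :=
    (hh.mono hsub).mul (by fun_prop)
  have intE : IntervalIntegrable (fun s : ℝ => Real.exp (s^2)) MeasureTheory.volume a r :=
    hcontE.intervalIntegrable
  have intD : IntervalIntegrable (fun s : ℝ => (h s - M) * Real.exp (s^2))
      MeasureTheory.volume a r :=
    (((hh.mono hsub).sub continuousOn_const).mul (by fun_prop)).intervalIntegrable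
  have ftc : Real.exp (r^2) * Z r - Real.exp (a^2) * Z a
      = ∫ s in a..r, -(h s * Real.exp (s^2)) := by
    refine (integral_eq_sub_of_hasDerivAt (f := fun t : ℝ => Real.exp (t^2) * Z t)
      (f' := fun s : ℝ => -(h s * Real.exp (s^2))) ?_ ?_).symm
    · intro s hs
      have hs1 : s ∈ Set.Ioi 1 := hsub hs
      have hd := (hasDeriv_expsq s).mul (hZd s hs1)
      refine hd.congr_deriv ?_
      ring
    · exact hconthE.neg.intervalIntegrable
  set I := ∫ s in a..r, Real.exp (s^2) with hIdef
  set D := ∫ s in a..r, (h s - M) * Real.exp (s^2) with hDdef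
  have hsplit : (∫ s in a..r, -(h s * Real.exp (s^2))) = -(D + M * I) := by
    rw [hDdef, hIdef, ← integral_const_mul, ← integral_add intD (intE.const_mul M),
      ← integral_neg]
    apply integral_congr
    intro s _
    ring
  have hI0 : 0 ≤ I := by
    rw [hIdef]
    apply integral_nonneg hra
    intro s _
    positivity
  have hDle : |D| ≤ ε' * I := by
    rw [hDdef, hIdef, ← integral_const_mul]
    have habs := intervalIntegral.abs_integral_le_integral_abs (f := fun s => (h s - M) * Real.exp (s^2)) (μ := MeasureTheory.volume) hra
    refine le_trans habs ?_
    apply integral_mono_on hra intD.abs (intE.const_mul ε')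
    intro s hs
    rw [abs_mul, abs_of_nonneg (Real.exp_pos _).le]
    exact mul_le_mul_of_nonneg_right (hha s hs.1) (Real.exp_pos _).le
  have hee : Real.exp (-r^2) * Real.exp (r^2) = 1 := by
    rw [← Real.exp_add]; simp
  have hftc2 : Real.exp (r^2) * Z r = C - (D + M * I) := by
    rw [hCdef]; linarith [ftc, hsplit]
  have hZr : r * Z r = r * Real.exp (-r^2) * C - M * (r * Real.exp (-r^2) * I)
      - r * Real.exp (-r^2) * D := by
    have step : r * Z r = r * Real.exp (-r^2) * (Real.exp (r^2) * Z r) := by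
      rw [Real.exp_neg]
      field_simp
    rw [step, hftc2]
    ring
  rw [Real.dist_eq]
  have hexpr : r * Z r - -M/2
      = r * Real.exp (-r^2) * C - M * (r * Real.exp (-r^2) * I - 1/2)
        - r * Real.exp (-r^2) * D := by
    rw [hZr]; ring
  have big : ∀ x y z : ℝ, |x - y - z| ≤ |x| + |y| + |z| := by
    intro x y z
    calc |x - y - z| ≤ |x - y| + |z| := abs_sub _ _
      _ ≤ |x| + |y| + |z| := by linarith [abs_sub x y]
  have t1 : |r * Real.exp (-r^2) * C| ≤ ε' := by
    rw [abs_mul, abs_of_nonneg hq, mul_comm]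
    exact h3
  have t2 : |M * (r * Real.exp (-r^2) * I - 1/2)| ≤ |M| * ε' := by
    rw [abs_mul]
    exact mul_le_mul_of_nonneg_left h1 (abs_nonneg M)
  have t3 : |r * Real.exp (-r^2) * D| ≤ ε' := by
    rw [mul_comm, abs_mul, abs_of_nonneg hq]
    calc |D| * (r * Real.exp (-r^2)) ≤ (ε' * I) * (r * Real.exp (-r^2)) :=
          mul_le_mul_of_nonneg_right hDle hq
      _ = ε' * (r * Real.exp (-r^2) * I) := by ring
      _ ≤ ε' * 1 := mul_le_mul_of_nonneg_left h2 hε'.le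
      _ = ε' := mul_one _
  have hfin : ε' * (4 * (1 + |M|)) = ε := by
    rw [hε'def]; field_simp
  have habsM : 0 ≤ |M| := abs_nonneg M
  calc |r * Z r - -M/2|
      = |r * Real.exp (-r^2) * C - M * (r * Real.exp (-r^2) * I - 1/2)
          - r * Real.exp (-r^2) * D| := by rw [hexpr]
    _ ≤ |r * Real.exp (-r^2) * C| + |M * (r * Real.exp (-r^2) * I - 1/2)|
          + |r * Real.exp (-r^2) * D| := big _ _ _
    _ ≤ ε' + |M| * ε' + ε' := by linarith
    _ < ε := by nlinarith

theorem stmt_17 (d : ℕ) (hd : 3 ≤ d) (lam L : ℝ)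
    (Z g : ℝ → ℝ)
    (hZC1 : ContDiffOn ℝ 1 Z (Set.Ioi 1))
    (hZneg : ∀ r ∈ Set.Ioi (1 : ℝ), Z r < 0)
    (hg : ContinuousOn g (Set.Ioi 1))
    (hgpos : ∀ r ∈ Set.Ioi (1 : ℝ), 0 ≤ g r)
    (hgO : ∃ c > 0, g =O[atTop] fun r : ℝ => Real.exp (-c * r ^ 2))
    (hode : ∀ r ∈ Set.Ioi (1 : ℝ),
      deriv Z r + 2 * r * Z r
        = -(lam + d) - (Z r ^ 2 + (((d : ℝ) - 1) / r) * Z r + g r))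
    (hlim : Tendsto Z atTop (nhds L)) :
    L = 0 ∧ Tendsto (fun r : ℝ => r * Z r) atTop (nhds (-(lam + d) / 2)) := by
  set h : ℝ → ℝ := fun r => (lam + d) + (Z r ^ 2 + (((d : ℝ) - 1) / r) * Z r + g r)
    with hhdef
  -- derivative hypothesis
  have hZd : ∀ r ∈ Set.Ioi (1:ℝ), HasDerivAt Z (-(2*r*Z r) - h r) r := by
    intro r hr
    have hdiff : DifferentiableAt ℝ Z r :=
      (hZC1.differentiableOn one_ne_zero r hr).differentiableAt (isOpen_Ioi.mem_nhds hr)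
    have hda := hdiff.hasDerivAt
    have heq := hode r hr
    have : -(2*r*Z r) - h r = deriv Z r := by
      rw [hhdef]; simp only; linarith
    rw [← this] at hda
    exact hda
  have hZcont : ContinuousOn Z (Set.Ioi 1) := hZC1.continuousOn
  have hh : ContinuousOn h (Set.Ioi 1) := by
    apply continuousOn_const.add
    apply ((hZcont.pow 2).add ?_).add hg
    apply ContinuousOn.mul ?_ hZcont
    apply continuousOn_const.div continuousOn_id
    intro x hx
    have : (1:ℝ) < x := hx
    simp only [id]
    intro hx0; rw [hx0] at this; norm_num at this
  -- limit of h
  have hinv : Tendsto (fun r : ℝ => ((d:ℝ)-1)/r) atTop (nhds 0) :=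
    tendsto_const_nhds.div_atTop tendsto_id
  have hmul : Tendsto (fun r : ℝ => (((d:ℝ)-1)/r) * Z r) atTop (nhds 0) := by
    simpa using hinv.mul hlim
  have hgt : Tendsto g atTop (nhds 0) := by
    obtain ⟨c, hc, hO⟩ := hgO
    have h1 : Tendsto (fun r : ℝ => c * r^2) atTop atTop :=
      (tendsto_pow_atTop two_ne_zero).const_mul_atTop hc
    have h2 : Tendsto (fun r : ℝ => -c * r^2) atTop atBot := by
      have := tendsto_neg_atBot_iff.mpr h1
      simpa [neg_mul] using this
    have h3 : Tendsto (fun r : ℝ => Real.exp (-c * r^2)) atTop (nhds 0) :=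
      Real.tendsto_exp_atBot.comp h2
    exact hO.trans_tendsto h3
  have hhM : Tendsto h atTop (nhds ((lam + d) + L^2)) := by
    have hconst : Tendsto (fun _ : ℝ => lam + (d:ℝ)) atTop (nhds (lam + (d:ℝ))) :=
      tendsto_const_nhds
    have hsum := hconst.add (((hlim.pow 2).add hmul).add hgt)
    simpa using hsum
  have hcore := core Z h ((lam + d) + L^2) hZd hh hhM
  -- L = 0
  have hZ0 : Tendsto Z atTop (nhds 0) := by
    have h1 : Tendsto (fun r : ℝ => (r * Z r) * r⁻¹) atTop
        (nhds (-((lam + d) + L^2)/2 * 0)) := hcore.mul tendsto_inv_atTop_zero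
    rw [mul_zero] at h1
    apply h1.congr'
    filter_upwards [eventually_gt_atTop (0:ℝ)] with r hr
    field_simp
  have hL : L = 0 := tendsto_nhds_unique hlim hZ0
  refine ⟨hL, ?_⟩
  rw [hL] at hcore
  convert hcore using 2
  norm_num
end
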